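/- For every strategy σ ∈ Σ^Opt, every state s₀ ∈ S', and every finite path ρ of M' starting at s₀ (all states in S', all steps in Opt), P'_{σ,s₀}(ρ) = Pr_{σ,s₀}(GoodCyl(ρ))/Val(s₀). -/

import Mathlib

open scoped ENNReal NNReal Classical
open Filter

universe u v

variable {S : Type u} {A : Type v}

/-- A finite MDP: `P s a = some d` means action `a` is legal at `s` and `d` is a
probability distribution on `S`; every state has at least one legal action. -/
structure MDP (S : Type u) (A : Type v) [Fintype S] [Fintype A] where
  P : S → A → Option (S → NNReal)
  sum_one : ∀ s a d, P s a = some d → (∑ s', d s') = 1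
  exists_legal : ∀ s, ∃ a, (P s a).isSome

/-- Last state of an alternating path starting at `s` with steps `steps`. -/
def lastState : S → List (A × S) → S
  | s, [] => s
  | _, (_, s') :: rest => lastState s' rest

/-- A finite path: a start state together with a list of (action, next-state) steps. -/
structure FPath (S : Type u) (A : Type v) where
  start : S
  steps : List (A × S)

namespace FPath

def last (ρ : FPath S A) : S := lastState ρ.start ρ.steps

def states (ρ : FPath S A) : List S := ρ.start :: ρ.steps.map Prod.snd

def length (ρ : FPath S A) : ℕ := ρ.steps.length

end FPath

/-- A (raw) strategy: maps each finite path (start state + steps) to a distribution on actions. -/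
def Strat (S : Type u) (A : Type v) := S → List (A × S) → A → ℝ≥0∞

/-- Shifted strategy `σ_ρ` for `ρ = (s₀, pre)`: `σ_ρ(ρ') = σ(ρ·ρ')`. -/
def shiftStrat (σ : Strat S A) (s₀ : S) (pre : List (A × S)) : Strat S A :=
  fun _ steps a => σ s₀ (pre ++ steps) a

/-- Generic cylinder weight (product of strategy- and transition-probabilities along the
steps), relative to a transition kernel `p`. The accumulator `pre` is the path-prefix so far. -/
noncomputable def wtP (p : S → A → S → ℝ≥0∞) (σ : Strat S A) (s₀ : S) :
    List (A × S) → List (A × S) → ℝ≥0∞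
  | _, [] => 1
  | pre, (a, s') :: rest =>
      σ s₀ pre a * p (lastState s₀ pre) a s' * wtP p σ s₀ (pre ++ [(a, s')]) rest
  termination_by pre l => l.length

/-- Generic cylinder probability of path `ρ` from start state `s`, kernel `p`. -/
noncomputable def cylProbP (p : S → A → S → ℝ≥0∞) (σ : Strat S A) (s : S) (ρ : FPath S A) :
    ℝ≥0∞ :=
  if ρ.start = s then wtP p σ ρ.start [] ρ.steps else 0

namespace MDP

variable [Fintype S] [Fintype A]

def legal (M : MDP S A) (s : S) (a : A) : Prop := (M.P s a).isSome

noncomputable def prob (M : MDP S A) (s : S) (a : A) (s' : S) : ℝ≥0∞ :=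
  (M.P s a).elim 0 fun d => (d s' : ℝ≥0∞)

/-- `ρ` is a finite path of `M` from `s`: every action legal, every transition of
positive probability. -/
def IsPathFrom (M : MDP S A) : S → List (A × S) → Prop
  | _, [] => True
  | s, (a, s') :: rest => M.legal s a ∧ 0 < M.prob s a s' ∧ M.IsPathFrom s' rest

def IsPath (M : MDP S A) (ρ : FPath S A) : Prop := M.IsPathFrom ρ.start ρ.steps

/-- `σ` is a strategy: at every finite path it gives a probability distribution on actions
supported on actions legal at the last state. -/
def IsStrategy (M : MDP S A) (σ : Strat S A) : Prop :=
  ∀ s steps, M.IsPathFrom s steps →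
    (∑ a, σ s steps a) = 1 ∧ ∀ a, 0 < σ s steps a → M.legal (lastState s steps) a

/-- Cylinder probability `P_{σ,s}(ρ)` in `M`. -/
noncomputable def cylProb (M : MDP S A) (σ : Strat S A) (s : S) (ρ : FPath S A) : ℝ≥0∞ :=
  cylProbP M.prob σ s ρ

/-- `T` is a set of sink states: each `t ∈ T` has exactly one legal action, leading back
to `t` with probability `1`. -/
def SinkSet (M : MDP S A) (T : Set S) : Prop :=
  ∀ t ∈ T, (∃! a, M.legal t a) ∧ ∀ a, M.legal t a → M.prob t a t = 1

/-- Generic pruned finite-path predicate: all states have positive value `v` and every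
step uses an `opt` state-action pair with positive transition probability in `M`. -/
def IsPathFromPruned (M : MDP S A) (v : S → ℝ≥0∞) (opt : S → A → Prop) :
    S → List (A × S) → Prop
  | s, [] => 0 < v s
  | s, (a, s') :: rest =>
      0 < v s ∧ opt s a ∧ 0 < M.prob s a s' ∧ M.IsPathFromPruned v opt s' rest

/-! ### Reachability -/

/-- `ρ` is a `T`-hitting path: its last state lies in `T` and no other state does. -/
def HitsFirst (T : Set S) (ρ : FPath S A) : Prop :=
  ρ.last ∈ T ∧ ∀ x ∈ ρ.states.dropLast, x ∉ T

/-- `Pr_{σ,s}(◊T)`: sum over `T`-hitting paths starting at `s` of their cylinder probabilities. -/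
noncomputable def prReach (M : MDP S A) (σ : Strat S A) (s : S) (T : Set S) : ℝ≥0∞ :=
  ∑' ρ : {ρ : FPath S A // M.IsPath ρ ∧ HitsFirst T ρ ∧ ρ.start = s}, M.cylProb σ s ρ.1

/-- `Val(s)` for reachability: supremum over strategies of `Pr_{σ,s}(◊T)`. -/
noncomputable def reachVal (M : MDP S A) (T : Set S) (s : S) : ℝ≥0∞ :=
  ⨆ (σ : Strat S A) (_ : M.IsStrategy σ), M.prReach σ s T

/-- `(s,a) ∈ Opt` for reachability. -/
def OptR (M : MDP S A) (T : Set S) (s : S) (a : A) : Prop :=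
  M.legal s a ∧ M.reachVal T s = ∑ s', M.prob s a s' * M.reachVal T s'

/-- `σ ∈ Σ^Opt` for reachability. -/
def SigmaOptR (M : MDP S A) (T : Set S) (σ : Strat S A) : Prop :=
  ∀ s steps, M.IsPathFrom s steps → ∀ a, 0 < σ s steps a → M.OptR T (lastState s steps) a

/-- Transition probabilities of the pruned MDP `M'` for reachability. -/
noncomputable def probR' (M : MDP S A) (T : Set S) (s : S) (a : A) (s' : S) : ℝ≥0∞ :=
  if M.OptR T s a ∧ 0 < M.reachVal T s then
    M.prob s a s' * M.reachVal T s' / M.reachVal T s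
  else 0

/-- `ρ` is a finite path of the pruned MDP `M'` (reachability version). -/
def IsPathR' (M : MDP S A) (T : Set S) (ρ : FPath S A) : Prop :=
  M.IsPathFromPruned (M.reachVal T) (M.OptR T) ρ.start ρ.steps

/-- Cylinder probability `P'_{σ,s}(ρ)` in the pruned MDP `M'` (reachability version). -/
noncomputable def cylProbR' (M : MDP S A) (T : Set S) (σ : Strat S A) (s : S) (ρ : FPath S A) :
    ℝ≥0∞ :=
  cylProbP (M.probR' T) σ s ρ

/-- `Pr'_{σ,s}(◊T)` in the pruned MDP `M'`. -/
noncomputable def prReach' (M : MDP S A) (σ : Strat S A) (s : S) (T : Set S) : ℝ≥0∞ :=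
  ∑' ρ : {ρ : FPath S A // M.IsPathR' T ρ ∧ HitsFirst T ρ ∧ ρ.start = s},
    M.cylProbR' T σ s ρ.1

/-- Probability of hitting `T` for the first time in exactly `r` steps, in `M`. -/
noncomputable def hitLenProb (M : MDP S A) (σ : Strat S A) (s : S) (T : Set S) (r : ℕ) :
    ℝ≥0∞ :=
  ∑' ρ : {ρ : FPath S A // M.IsPath ρ ∧ HitsFirst T ρ ∧ ρ.start = s ∧ ρ.length = r},
    M.cylProb σ s ρ.1

/-- Probability of hitting `T` for the first time in exactly `r` steps, in `M'`. -/
noncomputable def hitLenProb' (M : MDP S A) (σ : Strat S A) (s : S) (T : Set S) (r : ℕ) :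
    ℝ≥0∞ :=
  ∑' ρ : {ρ : FPath S A // M.IsPathR' T ρ ∧ HitsFirst T ρ ∧ ρ.start = s ∧ ρ.length = r},
    M.cylProbR' T σ s ρ.1

/-- Conditional expected length to target `E_{σ,s}(len_T | ◊T)`. -/
noncomputable def condExpLen (M : MDP S A) (σ : Strat S A) (s : S) (T : Set S) : ℝ≥0∞ :=
  ∑' r : ℕ, (r : ℝ≥0∞) * M.hitLenProb σ s T r / M.prReach σ s T

/-- Expected length to target in `M'`, `E'_{σ,s}(len_T)`; `∞` unless `Pr'_{σ,s}(◊T) = 1`. -/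
noncomputable def expLen' (M : MDP S A) (σ : Strat S A) (s : S) (T : Set S) : ℝ≥0∞ :=
  if M.prReach' σ s T = 1 then ∑' r : ℕ, (r : ℝ≥0∞) * M.hitLenProb' σ s T r else ⊤

/-! ### Safety -/

/-- `Safe_n(σ,s)`: probability of the paths of length `n` from `s` avoiding `Bad`. -/
noncomputable def safeN (M : MDP S A) (σ : Strat S A) (s : S) (Bad : Set S) (n : ℕ) : ℝ≥0∞ :=
  ∑' ρ : {ρ : FPath S A //
      M.IsPath ρ ∧ ρ.start = s ∧ ρ.length = n ∧ ∀ x ∈ ρ.states, x ∉ Bad},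
    M.cylProb σ s ρ.1

/-- `Pr_{σ,s}(□¬Bad) := ⨅ n, Safe_n(σ,s)`. -/
noncomputable def prSafe (M : MDP S A) (σ : Strat S A) (s : S) (Bad : Set S) : ℝ≥0∞ :=
  ⨅ n : ℕ, M.safeN σ s Bad n

/-- `Val(s)` for safety: supremum over strategies of `Pr_{σ,s}(□¬Bad)`. -/
noncomputable def safeVal (M : MDP S A) (Bad : Set S) (s : S) : ℝ≥0∞ :=
  ⨆ (σ : Strat S A) (_ : M.IsStrategy σ), M.prSafe σ s Bad

/-- `(s,a) ∈ Opt` for safety. -/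
def OptS (M : MDP S A) (Bad : Set S) (s : S) (a : A) : Prop :=
  M.legal s a ∧ M.safeVal Bad s = ∑ s', M.prob s a s' * M.safeVal Bad s'

/-- `σ ∈ Σ^Opt` for safety. -/
def SigmaOptS (M : MDP S A) (Bad : Set S) (σ : Strat S A) : Prop :=
  ∀ s steps, M.IsPathFrom s steps → ∀ a, 0 < σ s steps a → M.OptS Bad (lastState s steps) a

/-- `UPreⁱ(Bad)`. -/
def UPre (M : MDP S A) (Bad : Set S) : ℕ → Set S
  | 0 => Bad
  | i + 1 => {s | ∀ a, M.legal s a → ∃ s' ∈ M.UPre Bad i, 0 < M.prob s a s'}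

/-- `Good := S \ UPre*(Bad)`. -/
def GoodSet (M : MDP S A) (Bad : Set S) : Set S := (⋃ i, M.UPre Bad i)ᶜ

/-- `V := S \ (Good ∪ Bad)`. -/
def VSet (M : MDP S A) (Bad : Set S) : Set S := (M.GoodSet Bad ∪ Bad)ᶜ

/-- `Pr_{σ,s}(GoodCyl(ρ)) := P_{σ,s}(ρ) · Pr_{σ_ρ, last(ρ)}(□¬Bad)`. -/
noncomputable def goodCyl (M : MDP S A) (σ : Strat S A) (s : S) (Bad : Set S) (ρ : FPath S A) :
    ℝ≥0∞ :=
  M.cylProb σ s ρ * M.prSafe (shiftStrat σ ρ.start ρ.steps) ρ.last Bad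

/-- Transition probabilities of the pruned MDP `M'` for safety. -/
noncomputable def probS' (M : MDP S A) (Bad : Set S) (s : S) (a : A) (s' : S) : ℝ≥0∞ :=
  if M.OptS Bad s a ∧ 0 < M.safeVal Bad s then
    M.prob s a s' * M.safeVal Bad s' / M.safeVal Bad s
  else 0

/-- `ρ` is a finite path of the pruned MDP `M'` (safety version). -/
def IsPathS' (M : MDP S A) (Bad : Set S) (ρ : FPath S A) : Prop :=
  M.IsPathFromPruned (M.safeVal Bad) (M.OptS Bad) ρ.start ρ.steps

/-- Cylinder probability `P'_{σ,s}(ρ)` in the pruned MDP `M'` (safety version). -/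
noncomputable def cylProbS' (M : MDP S A) (Bad : Set S) (σ : Strat S A) (s : S)
    (ρ : FPath S A) : ℝ≥0∞ :=
  cylProbP (M.probS' Bad) σ s ρ

end MDP

/-- `Reward_n(ρ) = ∑_{i<n} R(sᵢ, aᵢ)` for `ρ` starting at `s` with steps `steps`. -/
def rewardOf (R : S → A → ℝ) : S → List (A × S) → ℝ
  | _, [] => 0
  | s, (a, s') :: rest => R s a + rewardOf R s' rest

namespace MDP

variable [Fintype S] [Fintype A]

/-- `E'_{σ,s}(Reward_n)` in the pruned MDP `M'` (safety version). -/
noncomputable def expRewN' (M : MDP S A) (Bad : Set S) (R : S → A → ℝ) (σ : Strat S A)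
    (s : S) (n : ℕ) : ℝ :=
  ∑' ρ : {ρ : FPath S A // M.IsPathS' Bad ρ ∧ ρ.start = s ∧ ρ.length = n},
    (M.cylProbS' Bad σ s ρ.1).toReal * rewardOf R ρ.1.start ρ.1.steps

/-- `E'_{σ,s}(MP) := liminf_n (1/n)·E'_{σ,s}(Reward_n)`. -/
noncomputable def mp' (M : MDP S A) (Bad : Set S) (R : S → A → ℝ) (σ : Strat S A) (s : S) :
    ℝ :=
  Filter.atTop.liminf fun n : ℕ => M.expRewN' Bad R σ s n / n

/-- `E_{σ,s}(Reward_n | □¬Bad)`. -/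
noncomputable def condExpRewN (M : MDP S A) (Bad : Set S) (R : S → A → ℝ) (σ : Strat S A)
    (s : S) (n : ℕ) : ℝ :=
  (∑' ρ : {ρ : FPath S A // M.IsPath ρ ∧ ρ.start = s ∧ ρ.length = n},
    (M.goodCyl σ s Bad ρ.1).toReal * rewardOf R ρ.1.start ρ.1.steps) /
  (M.prSafe σ s Bad).toReal

/-- `E_{σ,s}(MP | □¬Bad) := liminf_n (1/n)·E_{σ,s}(Reward_n | □¬Bad)`. -/
noncomputable def condMP (M : MDP S A) (Bad : Set S) (R : S → A → ℝ) (σ : Strat S A)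
    (s : S) : ℝ :=
  Filter.atTop.liminf fun n : ℕ => M.condExpRewN Bad R σ s n / n

end MDP



/-! ### Auxiliary lemmas for stmt17 -/

section Aux

variable {S : Type u} {A : Type v} [Fintype S] [Fintype A]

lemma aux_lastState_append (s : S) (l₁ l₂ : List (A × S)) :
    lastState s (l₁ ++ l₂) = lastState (lastState s l₁) l₂ := by
  induction l₁ generalizing s with
  | nil => rfl
  | cons hd tl ih =>
    obtain ⟨a, s'⟩ := hd
    exact ih s'

lemma aux_wtP_cons (p : S → A → S → ℝ≥0∞) (σ : Strat S A) (s₀ : S) (pre : List (A × S))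
    (as : A × S) (rest : List (A × S)) :
    wtP p σ s₀ pre (as :: rest)
      = σ s₀ pre as.1 * p (lastState s₀ pre) as.1 as.2 * wtP p σ s₀ (pre ++ [as]) rest := by
  obtain ⟨a, s'⟩ := as
  simp [wtP]

lemma aux_isPathFrom_append (M : MDP S A) {s : S} {l₁ l₂ : List (A × S)}
    (h₁ : M.IsPathFrom s l₁) (h₂ : M.IsPathFrom (lastState s l₁) l₂) :
    M.IsPathFrom s (l₁ ++ l₂) := by
  induction l₁ generalizing s with
  | nil => exact h₂
  | cons hd tl ih =>
    obtain ⟨a, s'⟩ := hd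
    exact ⟨h₁.1, h₁.2.1, ih h₁.2.2 h₂⟩

lemma aux_isPathFrom_prefix (M : MDP S A) {s : S} {l₁ l₂ : List (A × S)}
    (h : M.IsPathFrom s (l₁ ++ l₂)) : M.IsPathFrom s l₁ := by
  induction l₁ generalizing s with
  | nil => trivial
  | cons hd tl ih =>
    obtain ⟨a, s'⟩ := hd
    exact ⟨h.1, h.2.1, ih h.2.2⟩

lemma aux_pruned_isPathFrom (M : MDP S A) {Bad : Set S} {s : S} {l : List (A × S)}
    (h : M.IsPathFromPruned (M.safeVal Bad) (M.OptS Bad) s l) : M.IsPathFrom s l := by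
  induction l generalizing s with
  | nil => trivial
  | cons hd tl ih =>
    obtain ⟨a, s'⟩ := hd
    exact ⟨h.2.1.1, h.2.2.1, ih h.2.2.2⟩

lemma aux_safeVal_le_one (M : MDP S A) (Bad : Set S) (s : S) : M.safeVal Bad s ≤ 1 := by
  unfold MDP.safeVal
  refine iSup₂_le fun τ hτ => ?_
  unfold MDP.prSafe
  refine (iInf_le _ 0).trans ?_
  unfold MDP.safeN
  rcases isEmpty_or_nonempty {ρ : FPath S A // M.IsPath ρ ∧ ρ.start = s ∧ ρ.length = 0 ∧
      ∀ x ∈ ρ.states, x ∉ Bad} with hE | hN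
  · rw [tsum_empty]; exact zero_le_one
  · have hsub : ∀ (x y : {ρ : FPath S A // M.IsPath ρ ∧ ρ.start = s ∧ ρ.length = 0 ∧
        ∀ x ∈ ρ.states, x ∉ Bad}), x = y := by
      rintro ⟨⟨st₁, l₁⟩, h₁⟩ ⟨⟨st₂, l₂⟩, h₂⟩
      obtain rfl : l₁ = [] := List.length_eq_zero_iff.mp h₁.2.2.1
      obtain rfl : l₂ = [] := List.length_eq_zero_iff.mp h₂.2.2.1
      have e1 : st₁ = s := h₁.2.1
      have e2 : st₂ = s := h₂.2.1
      subst e1; subst e2; rfl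
    obtain ⟨x⟩ := hN
    rw [tsum_eq_single x fun b hb => absurd (hsub b x) hb]
    obtain ⟨⟨st, l⟩, hx⟩ := x
    obtain rfl : l = [] := List.length_eq_zero_iff.mp hx.2.2.1
    have e1 : st = s := hx.2.1
    simp [MDP.cylProb, cylProbP, wtP, e1]

lemma aux_safeVal_of_bad (M : MDP S A) {Bad : Set S} {s : S} (hs : s ∈ Bad) :
    M.safeVal Bad s = 0 := by
  refine le_antisymm ?_ zero_le
  unfold MDP.safeVal
  refine iSup₂_le fun τ hτ => ?_
  unfold MDP.prSafe
  refine (iInf_le _ 0).trans ?_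
  unfold MDP.safeN
  have : IsEmpty {ρ : FPath S A // M.IsPath ρ ∧ ρ.start = s ∧ ρ.length = 0 ∧
      ∀ x ∈ ρ.states, x ∉ Bad} := by
    constructor
    rintro ⟨ρ, h⟩
    exact h.2.2.2 ρ.start (by simp [FPath.states]) (by rw [h.2.1]; exact hs)
  rw [tsum_empty]

lemma aux_safeVal_ne_top (M : MDP S A) (Bad : Set S) (s : S) : M.safeVal Bad s ≠ ⊤ :=
  ((aux_safeVal_le_one M Bad s).trans_lt ENNReal.one_lt_top).ne

/-- Telescoping: pruned cylinder weight times the start value equals the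
unpruned weight times the end value. -/
lemma aux_wtP_pruned_mul (M : MDP S A) (Bad : Set S) (σ : Strat S A) (s₀ : S) :
    ∀ (steps pre : List (A × S)),
      M.IsPathFromPruned (M.safeVal Bad) (M.OptS Bad) (lastState s₀ pre) steps →
      wtP (M.probS' Bad) σ s₀ pre steps * M.safeVal Bad (lastState s₀ pre)
        = wtP M.prob σ s₀ pre steps * M.safeVal Bad (lastState s₀ (pre ++ steps)) := by
  intro steps
  induction steps with
  | nil => intro pre _; simp [wtP]
  | cons hd tl ih =>
    intro pre h
    obtain ⟨a, s'⟩ := hd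
    obtain ⟨hV, hOpt, hp, hrest⟩ := h
    have hVne : M.safeVal Bad (lastState s₀ pre) ≠ 0 := hV.ne'
    have hVtop := aux_safeVal_ne_top M Bad (lastState s₀ pre)
    have hlast' : lastState s₀ (pre ++ [(a, s')]) = s' := by
      rw [aux_lastState_append]; rfl
    have key := ih (pre ++ [(a, s')]) (by rw [hlast']; exact hrest)
    rw [hlast'] at key
    have hprob : M.probS' Bad (lastState s₀ pre) a s'
        = M.prob (lastState s₀ pre) a s' * M.safeVal Bad s'
            / M.safeVal Bad (lastState s₀ pre) := by
      simp [MDP.probS', hOpt, hV]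
    simp only [wtP, hprob]
    set X := M.prob (lastState s₀ pre) a s' * M.safeVal Bad s'
        / M.safeVal Bad (lastState s₀ pre) with hX
    have hc : X * M.safeVal Bad (lastState s₀ pre)
        = M.prob (lastState s₀ pre) a s' * M.safeVal Bad s' :=
      ENNReal.div_mul_cancel hVne hVtop
    calc σ s₀ pre a * X * wtP (M.probS' Bad) σ s₀ (pre ++ [(a, s')]) tl
          * M.safeVal Bad (lastState s₀ pre)
        = σ s₀ pre a * (X * M.safeVal Bad (lastState s₀ pre))
            * wtP (M.probS' Bad) σ s₀ (pre ++ [(a, s')]) tl := by ring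
      _ = σ s₀ pre a * (M.prob (lastState s₀ pre) a s' * M.safeVal Bad s')
            * wtP (M.probS' Bad) σ s₀ (pre ++ [(a, s')]) tl := by rw [hc]
      _ = σ s₀ pre a * M.prob (lastState s₀ pre) a s'
            * (wtP (M.probS' Bad) σ s₀ (pre ++ [(a, s')]) tl * M.safeVal Bad s') := by ring
      _ = σ s₀ pre a * M.prob (lastState s₀ pre) a s'
            * (wtP M.prob σ s₀ (pre ++ [(a, s')]) tl
              * M.safeVal Bad (lastState s₀ (pre ++ [(a, s')] ++ tl))) := by rw [key]
      _ = _ := by rw [← List.append_cons]; ring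

/-- Shifting: the weight computed with the shifted strategy is the weight of the
extended path under the original strategy. -/
lemma aux_wtP_shift (p : S → A → S → ℝ≥0∞) (σ : Strat S A) (s₀ : S) (pre : List (A × S)) :
    ∀ (steps pre' : List (A × S)),
      wtP p (shiftStrat σ s₀ pre) (lastState s₀ pre) pre' steps
        = wtP p σ s₀ (pre ++ pre') steps := by
  intro steps
  induction steps with
  | nil => intro pre'; simp [wtP]
  | cons hd tl ih =>
    intro pre'
    obtain ⟨a, s'⟩ := hd
    simp only [wtP, shiftStrat]
    rw [ih (pre' ++ [(a, s')]), ← aux_lastState_append, ← List.append_assoc]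

/-- Weights only depend on the strategy's values along genuine path prefixes. -/
lemma aux_wtP_congr (M : MDP S A) {τ₁ τ₂ : Strat S A} {s : S}
    (hagree : ∀ l a, M.IsPathFrom s l → τ₁ s l a = τ₂ s l a) :
    ∀ (steps pre' : List (A × S)), M.IsPathFrom s (pre' ++ steps) →
      wtP M.prob τ₁ s pre' steps = wtP M.prob τ₂ s pre' steps := by
  intro steps
  induction steps with
  | nil => intro _ _; simp [wtP]
  | cons hd tl ih =>
    intro pre' hpath
    obtain ⟨a, s'⟩ := hd
    simp only [wtP]
    rw [hagree pre' a (aux_isPathFrom_prefix M hpath),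
      ih (pre' ++ [(a, s')]) (by rw [← List.append_cons]; exact hpath)]

/-- The path condition used in the safety sums, in terms of step lists. -/
abbrev QCond (M : MDP S A) (Bad : Set S) (s : S) (n : ℕ) (l : List (A × S)) : Prop :=
  M.IsPathFrom s l ∧ l.length = n ∧ ∀ x ∈ s :: l.map Prod.snd, x ∉ Bad

/-- Splitting off the first step of a list-subtype. -/
def consEquiv (P : List (A × S) → Prop) (hP : ¬ P []) :
    {l : List (A × S) // P l} ≃ (Σ as : A × S, {rest : List (A × S) // P (as :: rest)}) where
  toFun x := match x with
    | ⟨[], h⟩ => absurd h hP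
    | ⟨as :: rest, h⟩ => ⟨as, rest, h⟩
  invFun y := ⟨y.1 :: y.2.1, y.2.2⟩
  left_inv x := match x with
    | ⟨[], h⟩ => absurd h hP
    | ⟨as :: rest, h⟩ => rfl
  right_inv y := rfl

lemma aux_tsum_QCond_succ (M : MDP S A) (Bad : Set S) (σ : Strat S A) (s₀ : S)
    (pre : List (A × S)) {s : S} (hlast : lastState s₀ pre = s) (n : ℕ) :
    (∑' l : {l : List (A × S) // QCond M Bad s (n + 1) l}, wtP M.prob σ s₀ pre l.1)
      = ∑ as : A × S, σ s₀ pre as.1 * M.prob s as.1 as.2 *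
          ∑' rest : {rest : List (A × S) // QCond M Bad s (n + 1) (as :: rest)},
            wtP M.prob σ s₀ (pre ++ [as]) rest.1 := by
  have hPnil : ¬ QCond M Bad s (n + 1) [] := by
    rintro ⟨-, h, -⟩
    simp at h
  calc (∑' l : {l : List (A × S) // QCond M Bad s (n + 1) l}, wtP M.prob σ s₀ pre l.1)
      = ∑' y : (Σ as : A × S, {rest : List (A × S) // QCond M Bad s (n + 1) (as :: rest)}),
          wtP M.prob σ s₀ pre (y.1 :: y.2.1) := by
        rw [← Equiv.tsum_eq (consEquiv (QCond M Bad s (n + 1)) hPnil).symm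
          (fun l : {l : List (A × S) // QCond M Bad s (n + 1) l} => wtP M.prob σ s₀ pre l.1)]
        exact tsum_congr fun y => rfl
    _ = ∑' as : A × S, ∑' rest : {rest : List (A × S) // QCond M Bad s (n + 1) (as :: rest)},
          wtP M.prob σ s₀ pre (as :: rest.1) :=
        ENNReal.tsum_sigma
          (fun as (rest : {rest : List (A × S) // QCond M Bad s (n + 1) (as :: rest)}) =>
            wtP M.prob σ s₀ pre (as :: rest.1))
    _ = ∑ as : A × S, ∑' rest : {rest : List (A × S) // QCond M Bad s (n + 1) (as :: rest)},
          wtP M.prob σ s₀ pre (as :: rest.1) := tsum_fintype _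
    _ = _ := by
        refine Finset.sum_congr rfl fun as _ => ?_
        calc (∑' rest : {rest : List (A × S) // QCond M Bad s (n + 1) (as :: rest)},
                wtP M.prob σ s₀ pre (as :: rest.1))
            = ∑' rest : {rest : List (A × S) // QCond M Bad s (n + 1) (as :: rest)},
                σ s₀ pre as.1 * M.prob s as.1 as.2 * wtP M.prob σ s₀ (pre ++ [as]) rest.1 :=
              tsum_congr fun rest => by rw [aux_wtP_cons, hlast]
          _ = _ := ENNReal.tsum_mul_left

/-- Core induction: the value is a lower bound on the safety tail sums of a
locally optimal strategy. -/
lemma aux_val_le_tsum (M : MDP S A) (Bad : Set S) (σ : Strat S A)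
    (hσ : M.IsStrategy σ) (hopt : M.SigmaOptS Bad σ) (s₀ : S) :
    ∀ (n : ℕ) (pre : List (A × S)) (s : S), M.IsPathFrom s₀ pre → lastState s₀ pre = s →
      M.safeVal Bad s ≤
        ∑' l : {l : List (A × S) // QCond M Bad s n l}, wtP M.prob σ s₀ pre l.1 := by
  intro n
  induction n with
  | zero =>
    intro pre s hpre hlast
    by_cases hB : s ∈ Bad
    · rw [aux_safeVal_of_bad M hB]; exact zero_le
    · have hx : QCond M Bad s 0 [] := by
        refine ⟨trivial, rfl, ?_⟩
        intro x hx
        simp only [List.map_nil, List.mem_singleton] at hx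
        subst hx; exact hB
      refine le_trans (aux_safeVal_le_one M Bad s) ?_
      have hle := ENNReal.le_tsum (f := fun l : {l : List (A × S) // QCond M Bad s 0 l} =>
        wtP M.prob σ s₀ pre l.1) ⟨[], hx⟩
      simpa [wtP] using hle
  | succ n ih =>
    intro pre s hpre hlast
    by_cases hB : s ∈ Bad
    · rw [aux_safeVal_of_bad M hB]; exact zero_le
    rw [aux_tsum_QCond_succ M Bad σ s₀ pre hlast n, Fintype.sum_prod_type]
    calc M.safeVal Bad s
        = ∑ a : A, σ s₀ pre a * M.safeVal Bad s := by
          rw [← Finset.sum_mul, (hσ s₀ pre hpre).1, one_mul]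
      _ ≤ ∑ a : A, ∑ s' : S, σ s₀ pre a * M.prob s a s' *
            ∑' rest : {rest : List (A × S) // QCond M Bad s (n + 1) ((a, s') :: rest)},
              wtP M.prob σ s₀ (pre ++ [(a, s')]) rest.1 := by
        refine Finset.sum_le_sum fun a _ => ?_
        by_cases hσa : σ s₀ pre a = 0
        · simp [hσa]
        · have hOa : M.OptS Bad s a := by
            have := hopt s₀ pre hpre a (pos_iff_ne_zero.mpr hσa)
            rwa [hlast] at this
          calc σ s₀ pre a * M.safeVal Bad s
              = σ s₀ pre a * ∑ s' : S, M.prob s a s' * M.safeVal Bad s' := by rw [← hOa.2]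
            _ = ∑ s' : S, σ s₀ pre a * (M.prob s a s' * M.safeVal Bad s') :=
                Finset.mul_sum _ _ _
            _ ≤ _ := by
              refine Finset.sum_le_sum fun s' _ => ?_
              by_cases hp : M.prob s a s' = 0
              · simp [hp]
              · have hppos : 0 < M.prob s a s' := pos_iff_ne_zero.mpr hp
                have hleg : M.legal s a := hOa.1
                have hpre' : M.IsPathFrom s₀ (pre ++ [(a, s')]) :=
                  aux_isPathFrom_append M hpre (by rw [hlast]; exact ⟨hleg, hppos, trivial⟩)
                have hlast' : lastState s₀ (pre ++ [(a, s')]) = s' := by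
                  rw [aux_lastState_append, hlast]; rfl
                have hIH := ih (pre ++ [(a, s')]) s' hpre' hlast'
                have hiff : ∀ rest : List (A × S),
                    QCond M Bad s (n + 1) ((a, s') :: rest) ↔ QCond M Bad s' n rest := by
                  intro rest
                  constructor
                  · rintro ⟨h1, h2, h3⟩
                    refine ⟨h1.2.2, by simpa using h2, fun x hx => h3 x ?_⟩
                    simp only [List.map_cons]
                    exact List.mem_cons_of_mem _ (by simpa using hx)
                  · rintro ⟨h1, h2, h3⟩
                    refine ⟨⟨hleg, hppos, h1⟩, by simp [h2], fun x hx => ?_⟩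
                    simp only [List.map_cons, List.mem_cons] at hx
                    rcases hx with rfl | hx
                    · exact hB
                    · exact h3 x (by simpa using hx)
                calc σ s₀ pre a * (M.prob s a s' * M.safeVal Bad s')
                    = σ s₀ pre a * M.prob s a s' * M.safeVal Bad s' := (mul_assoc _ _ _).symm
                  _ ≤ _ := by
                    refine mul_le_mul_right (hIH.trans_eq ?_) _
                    exact (Equiv.tsum_eq (Equiv.subtypeEquivRight hiff)
                      (fun rest : {rest : List (A × S) // QCond M Bad s' n rest} =>
                        wtP M.prob σ s₀ (pre ++ [(a, s')]) rest.1)).symm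

lemma aux_wtP_shift' (p : S → A → S → ℝ≥0∞) (σ : Strat S A) (s₀ : S) (pre : List (A × S))
    {s : S} (hlast : lastState s₀ pre = s) (steps : List (A × S)) :
    wtP p (shiftStrat σ s₀ pre) s [] steps = wtP p σ s₀ pre steps := by
  subst hlast
  rw [aux_wtP_shift p σ s₀ pre steps [], List.append_nil]

/-- A genuine strategy agreeing with the shifted strategy along paths from `s`. -/
lemma aux_patched (M : MDP S A) (σ : Strat S A) (hσ : M.IsStrategy σ)
    (s₀ : S) (pre : List (A × S)) (hpre : M.IsPathFrom s₀ pre) {s : S}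
    (hlast : lastState s₀ pre = s) :
    ∃ τ : Strat S A, M.IsStrategy τ ∧
      ∀ l a, M.IsPathFrom s l → shiftStrat σ s₀ pre s l a = τ s l a := by
  classical
  refine ⟨fun t steps a =>
      if t = s ∧ M.IsPathFrom t steps then σ s₀ (pre ++ steps) a
      else if a = (M.exists_legal (lastState t steps)).choose then 1 else 0, ?_, ?_⟩
  · intro t steps hp
    by_cases hc : t = s ∧ M.IsPathFrom t steps
    · have hps : M.IsPathFrom s₀ (pre ++ steps) :=
        aux_isPathFrom_append M hpre (by rw [hlast, ← hc.1]; exact hp)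
      obtain ⟨h1, h2⟩ := hσ s₀ (pre ++ steps) hps
      refine ⟨?_, ?_⟩
      · simp only [if_pos hc]
        exact h1
      · intro a ha
        simp only [if_pos hc] at ha
        have := h2 a ha
        rwa [aux_lastState_append, hlast, ← hc.1] at this
    · refine ⟨?_, ?_⟩
      · simp only [if_neg hc]
        simp
      · intro a ha
        simp only [if_neg hc] at ha
        by_cases hac : a = (M.exists_legal (lastState t steps)).choose
        · subst hac; exact (M.exists_legal _).choose_spec
        · simp [hac] at ha
  · intro l a hl
    show σ s₀ (pre ++ l) a = _
    exact (if_pos ⟨rfl, hl⟩).symm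

/-- `Safe_n` for the shifted strategy in terms of weights of the original strategy. -/
lemma aux_safeN_shift (M : MDP S A) (Bad : Set S) (σ : Strat S A) (s₀ : S)
    (pre : List (A × S)) {s : S} (hlast : lastState s₀ pre = s) (n : ℕ) :
    M.safeN (shiftStrat σ s₀ pre) s Bad n
      = ∑' l : {l : List (A × S) // QCond M Bad s n l}, wtP M.prob σ s₀ pre l.1 := by
  unfold MDP.safeN
  let e : {l : List (A × S) // QCond M Bad s n l} ≃
      {ρ : FPath S A // M.IsPath ρ ∧ ρ.start = s ∧ ρ.length = n ∧ ∀ x ∈ ρ.states, x ∉ Bad} :=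
  { toFun := fun l => ⟨⟨s, l.1⟩, l.2.1, rfl, l.2.2.1, l.2.2.2⟩
    invFun := fun ρ => ⟨ρ.1.steps, by
      obtain ⟨⟨st, steps⟩, h⟩ := ρ
      have hst : st = s := h.2.1
      subst hst
      exact ⟨h.1, h.2.2.1, h.2.2.2⟩⟩
    left_inv := fun l => rfl
    right_inv := fun ρ => by
      obtain ⟨⟨st, steps⟩, h⟩ := ρ
      have hst : st = s := h.2.1
      subst hst
      rfl }
  rw [← Equiv.tsum_eq e
    (fun ρ : {ρ : FPath S A // M.IsPath ρ ∧ ρ.start = s ∧ ρ.length = n ∧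
      ∀ x ∈ ρ.states, x ∉ Bad} => M.cylProb (shiftStrat σ s₀ pre) s ρ.1)]
  refine tsum_congr fun l => ?_
  have hel : ((e l : {ρ : FPath S A // M.IsPath ρ ∧ ρ.start = s ∧ ρ.length = n ∧
      ∀ x ∈ ρ.states, x ∉ Bad}) : FPath S A) = ⟨s, l.1⟩ := rfl
  rw [hel]
  have key := aux_wtP_shift' M.prob σ s₀ pre hlast l.1
  simpa [MDP.cylProb, cylProbP] using key

/-- The shifted locally-optimal strategy achieves the value. -/
lemma aux_prSafe_shift_eq (M : MDP S A) (Bad : Set S) (σ : Strat S A)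
    (hσ : M.IsStrategy σ) (hopt : M.SigmaOptS Bad σ)
    (s₀ : S) (pre : List (A × S)) (hpre : M.IsPathFrom s₀ pre) {s : S}
    (hlast : lastState s₀ pre = s) :
    M.prSafe (shiftStrat σ s₀ pre) s Bad = M.safeVal Bad s := by
  apply le_antisymm
  · obtain ⟨τ, hτstrat, hagree⟩ := aux_patched M σ hσ s₀ pre hpre hlast
    have heq : ∀ n, M.safeN (shiftStrat σ s₀ pre) s Bad n = M.safeN τ s Bad n := by
      intro n
      unfold MDP.safeN
      refine tsum_congr ?_
      rintro ⟨⟨st, steps⟩, hst⟩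
      have h2 : s = st := hst.2.1.symm
      subst h2
      have key := aux_wtP_congr M hagree steps [] hst.1
      simpa [MDP.cylProb, cylProbP] using key
    have hle : M.prSafe τ s Bad ≤ M.safeVal Bad s := by
      unfold MDP.safeVal
      exact le_iSup₂ (f := fun σ' (_ : M.IsStrategy σ') => M.prSafe σ' s Bad) τ hτstrat
    refine le_trans (le_of_eq ?_) hle
    unfold MDP.prSafe
    exact iInf_congr heq
  · unfold MDP.prSafe
    refine le_iInf fun n => ?_
    rw [aux_safeN_shift M Bad σ s₀ pre hlast n]
    exact aux_val_le_tsum M Bad σ hσ hopt s₀ n pre s hpre hlast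

end Aux

/-- for `σ ∈ Σ^Opt`, `s₀ ∈ S'`, and every finite path `ρ` of `M'` starting
at `s₀`, `P'_{σ,s₀}(ρ) = Pr_{σ,s₀}(GoodCyl(ρ))/Val(s₀)`. -/
theorem stmt17 {S : Type u} {A : Type v} [Fintype S] [Fintype A] [Nonempty S] [Nonempty A]
    (M : MDP S A) (Bad : Set S) (hBad : M.SinkSet Bad)
    (σ : Strat S A) (hσ : M.IsStrategy σ) (hopt : M.SigmaOptS Bad σ)
    (s₀ : S) (hs₀ : 0 < M.safeVal Bad s₀)
    (ρ : FPath S A) (hstart : ρ.start = s₀) (hρ : M.IsPathS' Bad ρ) :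
    M.cylProbS' Bad σ s₀ ρ = M.goodCyl σ s₀ Bad ρ / M.safeVal Bad s₀ := by
  subst hstart
  obtain ⟨st, steps⟩ := ρ
  have hVpos : 0 < M.safeVal Bad st := hs₀
  have hVne : M.safeVal Bad st ≠ 0 := hVpos.ne'
  have hVtop := aux_safeVal_ne_top M Bad st
  have hpath : M.IsPathFrom st steps := aux_pruned_isPathFrom M hρ
  have htel := aux_wtP_pruned_mul M Bad σ st steps [] hρ
  have h1 : M.cylProbS' Bad σ st ⟨st, steps⟩ = wtP (M.probS' Bad) σ st [] steps := by
    simp [MDP.cylProbS', cylProbP, FPath.start]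
  have hshift : M.prSafe (shiftStrat σ st steps) (lastState st steps) Bad
      = M.safeVal Bad (lastState st steps) :=
    aux_prSafe_shift_eq M Bad σ hσ hopt st steps hpath rfl
  have h2 : M.goodCyl σ st Bad ⟨st, steps⟩
      = wtP M.prob σ st [] steps * M.safeVal Bad (lastState st steps) := by
    unfold MDP.goodCyl
    rw [show FPath.last ⟨st, steps⟩ = lastState st steps from rfl,
      show FPath.steps ⟨st, steps⟩ = steps from rfl,
      show FPath.start ⟨st, steps⟩ = st from rfl, hshift]
    simp [MDP.cylProb, cylProbP, FPath.start]
  rw [h1, h2, ENNReal.eq_div_iff hVne hVtop, mul_comm]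
  simpa [lastState] using htel
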